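/- Let g ∈ GL_n(F_2) be an element of order |g| = 2^{m+1} with m > 0, let d be the degree of the minimal polynomial of g, and suppose d < |g|. Write n = kd + l with 0 ≤ l < d, and let z = g^{2^m}. Then j(g) := dim (Id − z)(F_2^n) satisfies j(g) ≤ (n − l)(1 − |g|/(2d)) + max(0, l − |g|/2). -/

import Mathlib

open Module LinearMap Polynomial

section chain
variable {K : Type*} [Field K] {V : Type*} [AddCommGroup V] [Module K V] [FiniteDimensional K V]

/-- number of Jordan blocks of size > j, as dim of (ker φ ⊓ range φ^j). -/
noncomputable def uFn (φ : V →ₗ[K] V) (j : ℕ) : ℕ :=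
  finrank K ↥(LinearMap.ker φ ⊓ LinearMap.range (φ ^ j))

lemma rank_pow_succ_add (φ : V →ₗ[K] V) (j : ℕ) :
    finrank K ↥(LinearMap.range (φ ^ j)) =
      finrank K ↥(LinearMap.range (φ ^ (j + 1))) + uFn φ j := by
  set S := LinearMap.range (φ ^ j) with hS
  have h := LinearMap.finrank_range_add_finrank_ker (φ.comp S.subtype)
  have hrange : LinearMap.range (φ.comp S.subtype) = LinearMap.range (φ ^ (j + 1)) := by
    rw [LinearMap.range_comp, Submodule.range_subtype, pow_succ', Module.End.mul_eq_comp,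
      LinearMap.range_comp]
  have hker : finrank K ↥(LinearMap.ker (φ.comp S.subtype)) = uFn φ j := by
    have h1 : LinearMap.ker (φ.comp S.subtype) =
        Submodule.comap S.subtype (LinearMap.ker φ ⊓ S) := by
      rw [LinearMap.ker_comp, Submodule.comap_inf, Submodule.comap_subtype_self, inf_top_eq]
    rw [h1]
    exact (Submodule.comapSubtypeEquivOfLe (inf_le_right : LinearMap.ker φ ⊓ S ≤ S)).finrank_eq
  rw [hrange, hker] at h
  exact h.symm

lemma uFn_antitone (φ : V →ₗ[K] V) : Antitone (uFn φ) := by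
  intro i j hij
  apply Submodule.finrank_mono
  apply inf_le_inf_left
  have : φ ^ j = (φ ^ i).comp (φ ^ (j - i)) := by
    rw [← Module.End.mul_eq_comp, ← pow_add, Nat.add_sub_cancel' hij]
  rw [this]
  exact LinearMap.range_comp_le_range _ _

lemma rank_pow_le_of_nilpotent (φ : V →ₗ[K] V) {d : ℕ} (hd : φ ^ d = 0) {a : ℕ} (ha : a ≤ d) :
    finrank K ↥(LinearMap.range (φ ^ a)) ≤ (d - a) * uFn φ a := by
  have key : ∀ b : ℕ, finrank K ↥(LinearMap.range (φ ^ a)) ≤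
      finrank K ↥(LinearMap.range (φ ^ (a + b))) + b * uFn φ a := by
    intro b
    induction b with
    | zero => simp
    | succ b ih =>
      have h1 := rank_pow_succ_add φ (a + b)
      have h2 : uFn φ (a + b) ≤ uFn φ a := uFn_antitone φ (Nat.le_add_right a b)
      have : a + (b + 1) = (a + b) + 1 := by omega
      rw [this, Nat.succ_mul]
      omega
  have h := key (d - a)
  rw [Nat.add_sub_cancel' ha, hd] at h
  have h0 : finrank K ↥(LinearMap.range (0 : V →ₗ[K] V)) = 0 := by
    rw [LinearMap.range_zero]; exact finrank_bot K V
  omega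

lemma rank_pow_add_le (φ : V →ₗ[K] V) (a : ℕ) :
    finrank K ↥(LinearMap.range (φ ^ a)) + a * uFn φ a ≤ finrank K V := by
  have key : ∀ b c : ℕ, b + c = a →
      finrank K ↥(LinearMap.range (φ ^ a)) + b * uFn φ a ≤
        finrank K ↥(LinearMap.range (φ ^ c)) := by
    intro b
    induction b with
    | zero =>
      intro c hc
      obtain rfl : c = a := by omega
      simp
    | succ b ih =>
      intro c hc
      have ihc := ih (c + 1) (by omega)
      have h1 := rank_pow_succ_add φ c
      have h2 : uFn φ a ≤ uFn φ c := uFn_antitone φ (by omega)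
      rw [Nat.succ_mul]
      omega
  have h := key a 0 (by omega)
  have h0 : finrank K ↥(LinearMap.range (φ ^ 0)) = finrank K V := by
    rw [pow_zero, Module.End.one_eq_id, LinearMap.range_id]
    exact finrank_top K V
  omega

end chain

theorem rank_involution_bound_of_min_poly
    (n m d k l : ℕ) (hm : 0 < m)
    (g : Matrix (Fin n) (Fin n) (ZMod 2))
    (hord : orderOf g = 2 ^ (m + 1))
    (hd : (minpoly (ZMod 2) g).natDegree = d)
    (hdlt : d < 2 ^ (m + 1))
    (hn : n = k * d + l) (hl : l < d) :
    (Matrix.rank (1 - g ^ (2 ^ m)) : ℚ) ≤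
      ((n : ℚ) - l) * (1 - (2 ^ (m + 1) : ℚ) / (2 * d)) +
        max 0 ((l : ℚ) - (2 ^ m : ℚ)) := by
  rcases Nat.eq_zero_or_pos n with rfl | hn0
  · exfalso
    have hg1 : g = 1 := Subsingleton.elim _ _
    rw [hg1, orderOf_one] at hord
    have := Nat.one_lt_two_pow (n := m + 1) (by omega)
    omega
  haveI : Nonempty (Fin n) := ⟨⟨0, hn0⟩⟩
  haveI : Fact (Nat.Prime 2) := ⟨Nat.prime_two⟩
  set B : Matrix (Fin n) (Fin n) (ZMod 2) := g - 1 with hB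
  have hgB : g = B + 1 := (sub_add_cancel g 1).symm
  have hcomm : Commute B (1 : Matrix (Fin n) (Fin n) (ZMod 2)) := Commute.one_right B
  have hpow : g ^ 2 ^ (m + 1) = 1 := by rw [← hord]; exact pow_orderOf_eq_one g
  have hkey : ∀ e : ℕ, g ^ 2 ^ e = B ^ 2 ^ e + 1 := by
    intro e
    conv_lhs => rw [hgB]
    rw [add_pow_char_pow_of_commute 2 e hcomm, one_pow]
  have hint : IsIntegral (ZMod 2) g := IsIntegral.of_finite _ _
  have haev : (Polynomial.aeval g)
      ((Polynomial.X - Polynomial.C 1 : Polynomial (ZMod 2)) ^ 2 ^ (m + 1)) = 0 := by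
    rw [map_pow, map_sub, Polynomial.aeval_X, Polynomial.aeval_C, map_one, ← hB]
    have h1 := hkey (m + 1)
    rw [hpow] at h1
    have h2 : B ^ 2 ^ (m + 1) + 1 = 0 + 1 := by rw [zero_add, ← h1]
    exact add_right_cancel h2
  have hdvd : minpoly (ZMod 2) g ∣ (Polynomial.X - Polynomial.C 1) ^ 2 ^ (m + 1) :=
    minpoly.dvd _ _ haev
  have hprime : Prime (Polynomial.X - Polynomial.C (1 : ZMod 2)) :=
    (Polynomial.irreducible_X_sub_C (1 : ZMod 2)).prime
  obtain ⟨i, hi, hassoc⟩ := (dvd_prime_pow hprime _).mp hdvd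
  have hmin : minpoly (ZMod 2) g = (Polynomial.X - Polynomial.C 1) ^ i :=
    Polynomial.eq_of_monic_of_associated (minpoly.monic hint)
      ((Polynomial.monic_X_sub_C 1).pow i) hassoc
  have hid : i = d := by
    rw [← hd, hmin, Polynomial.natDegree_pow, Polynomial.natDegree_X_sub_C, mul_one]
  have hBd : B ^ d = 0 := by
    have h1 := minpoly.aeval (ZMod 2) g
    rw [hmin, hid, map_pow, map_sub, Polynomial.aeval_X, Polynomial.aeval_C, map_one, ← hB] at h1
    exact h1
  have hdgt : 2 ^ m < d := by
    by_contra h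
    push_neg at h
    have hB2m : B ^ 2 ^ m = 0 := by
      calc B ^ 2 ^ m = B ^ (2 ^ m - d) * B ^ d := by rw [← pow_add, Nat.sub_add_cancel h]
        _ = 0 := by rw [hBd, mul_zero]
    have hone : g ^ 2 ^ m = 1 := by rw [hkey m, hB2m, zero_add]
    have hdvd2 := orderOf_dvd_of_pow_eq_one hone
    rw [hord] at hdvd2
    have hle := Nat.le_of_dvd (Nat.two_pow_pos m) hdvd2
    have h2 : (2:ℕ) ^ m < 2 ^ (m + 1) := Nat.pow_lt_pow_right (by norm_num) (by omega)
    omega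
  have hsub : (1 : Matrix (Fin n) (Fin n) (ZMod 2)) - g ^ 2 ^ m = B ^ 2 ^ m := by
    rw [hkey m]
    have hneg := CharTwo.neg_eq (R := Matrix (Fin n) (Fin n) (ZMod 2)) (B ^ 2 ^ m)
    calc (1 : Matrix (Fin n) (Fin n) (ZMod 2)) - (B ^ 2 ^ m + 1) = -(B ^ 2 ^ m) := by abel
      _ = B ^ 2 ^ m := hneg
  rw [hsub]
  set φ := B.mulVecLin with hφ
  have hmv : ∀ e : ℕ, (B ^ e).mulVecLin = φ ^ e := by
    intro e
    induction e with
    | zero => simp [Matrix.mulVecLin_one, Module.End.one_eq_id]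
    | succ e ih => rw [pow_succ, pow_succ, Matrix.mulVecLin_mul, ih, Module.End.mul_eq_comp]
  have hrank : ∀ e : ℕ, Matrix.rank (B ^ e) = finrank (ZMod 2) ↥(LinearMap.range (φ ^ e)) := by
    intro e; rw [Matrix.rank, hmv e]
  have hφd : φ ^ d = 0 := by rw [← hmv, hBd, Matrix.mulVecLin_zero]
  have h1 : Matrix.rank (B ^ 2 ^ m) ≤ (d - 2 ^ m) * uFn φ (2 ^ m) := by
    rw [hrank]
    exact rank_pow_le_of_nilpotent φ hφd (le_of_lt hdgt)
  have h2 : Matrix.rank (B ^ 2 ^ m) + 2 ^ m * uFn φ (2 ^ m) ≤ n := by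
    have hkey2 := rank_pow_add_le φ (2 ^ m)
    rw [hrank]
    have hfr : finrank (ZMod 2) (Fin n → ZMod 2) = n := Module.finrank_fin_fun _
    omega
  -- final arithmetic over ℚ
  have hdq : ((d:ℚ)) ≠ 0 := by
    have : 0 < d := by omega
    exact_mod_cast this.ne'
  have hRHS : ((n : ℚ) - l) * (1 - (2 ^ (m + 1) : ℚ) / (2 * d)) =
      (k:ℚ) * d - k * 2 ^ m := by
    rw [hn]
    push_cast
    field_simp
    ring
  rw [hRHS]
  have h1q : (Matrix.rank (B ^ 2 ^ m) : ℚ) ≤ ((d:ℚ) - 2 ^ m) * uFn φ (2 ^ m) := by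
    have h1' : (Matrix.rank (B ^ 2 ^ m) : ℚ) ≤ ((d - 2 ^ m : ℕ) : ℚ) * uFn φ (2 ^ m) := by
      exact_mod_cast h1
    rw [Nat.cast_sub hdgt.le] at h1'
    push_cast at h1' ⊢
    exact h1'
  have h2q : (Matrix.rank (B ^ 2 ^ m) : ℚ) + 2 ^ m * uFn φ (2 ^ m) ≤ (n:ℚ) := by
    exact_mod_cast h2
  have hnq : (n:ℚ) = k * d + l := by exact_mod_cast hn
  have hdm : (0:ℚ) ≤ (d:ℚ) - 2 ^ m := by
    have : ((2:ℚ)) ^ m ≤ d := by exact_mod_cast hdgt.le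
    linarith
  rcases le_or_gt (uFn φ (2 ^ m)) k with htk | htk
  · have htkq : ((uFn φ (2 ^ m) : ℚ)) ≤ k := by exact_mod_cast htk
    have hmul : ((d:ℚ) - 2 ^ m) * uFn φ (2 ^ m) ≤ ((d:ℚ) - 2 ^ m) * k :=
      mul_le_mul_of_nonneg_left htkq hdm
    have hmax : (0:ℚ) ≤ max 0 ((l : ℚ) - (2 ^ m : ℚ)) := le_max_left _ _
    nlinarith [h1q]
  · have htkq : (k:ℚ) + 1 ≤ uFn φ (2 ^ m) := by exact_mod_cast htk
    have hmul : (2:ℚ) ^ m * ((k:ℚ) + 1) ≤ 2 ^ m * uFn φ (2 ^ m) :=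
      mul_le_mul_of_nonneg_left htkq (by positivity)
    have hmax : (l : ℚ) - (2 ^ m : ℚ) ≤ max 0 ((l : ℚ) - (2 ^ m : ℚ)) := le_max_right _ _
    nlinarith [h2q]
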